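/- Let 𝔽 be a field, and let K ∈ 𝔽^{n×r₁} and L ∈ 𝔽^{n×r₂}. Then there exist an integer n₁ with 0 ≤ n₁ ≤ n, an invertible matrix R ∈ 𝔽^{n×n}, and matrices K₁ ∈ 𝔽^{n₁×r₁} of full row rank n₁, L₁ ∈ 𝔽^{n₁×r₂}, L₂ ∈ 𝔽^{(n−n₁)×r₂} such that RK equals the block matrix with K₁ on top and the zero matrix below, RL equals the block matrix with L₁ on top and L₂ below, and the intersection of column spaces satisfies range(K) ∩ range(L) = { R⁻¹ w : w ∈ 𝔽^n whose first n₁ coordinates equal L₁x for some x ∈ ker(L₂) and whose last n−n₁ coordinates are zero }. -/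

import Mathlib

open Matrix

noncomputable section

/-- Row reduction of a pair of matrices: there is an invertible `R` bringing `K` to the
form `[K₁; 0]` with `K₁` of full row rank and `L` to `[L₁; L₂]`, and the intersection of
the column spaces of `K` and `L` consists of the vectors `R⁻¹ [L₁ x; 0]` with `x ∈ ker L₂`. -/
theorem intersection_of_column_spaces
    {𝔽 : Type*} [Field 𝔽] {n r₁ r₂ : ℕ}
    (K : Matrix (Fin n) (Fin r₁) 𝔽) (L : Matrix (Fin n) (Fin r₂) 𝔽) :
    ∃ (n₁ : ℕ) (hn₁ : n₁ ≤ n) (R : Matrix (Fin n) (Fin n) 𝔽) (_ : IsUnit R)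
      (K₁ : Matrix (Fin n₁) (Fin r₁) 𝔽) (L₁ : Matrix (Fin n₁) (Fin r₂) 𝔽)
      (L₂ : Matrix (Fin (n - n₁)) (Fin r₂) 𝔽),
      K₁.rank = n₁ ∧
      (∀ (i : Fin n) (j : Fin r₁),
        (R * K) i j = if h : (i : ℕ) < n₁ then K₁ ⟨i, h⟩ j else 0) ∧
      (∀ (i : Fin n) (j : Fin r₂),
        (R * L) i j = if h : (i : ℕ) < n₁ then L₁ ⟨i, h⟩ j
          else L₂ ⟨(i : ℕ) - n₁, by have := i.isLt; omega⟩ j) ∧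
      (∀ u : Fin n → 𝔽,
        (u ∈ LinearMap.range K.mulVecLin ⊓ LinearMap.range L.mulVecLin) ↔
        ∃ x : Fin r₂ → 𝔽, L₂.mulVec x = 0 ∧
          u = R⁻¹.mulVec (fun i => if h : (i : ℕ) < n₁ then L₁.mulVec x ⟨i, h⟩ else 0)) := by
  classical
  set V : Submodule 𝔽 (Fin n → 𝔽) := LinearMap.range K.mulVecLin with hV
  set n₁ : ℕ := Module.finrank 𝔽 V with hn1def
  have hn₁ : n₁ ≤ n := by
    have h1 := Submodule.finrank_le V
    rwa [Module.finrank_fin_fun] at h1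
  -- the projection onto the last `n - n₁` coordinates
  have hemb : ∀ t : Fin (n - n₁), n₁ + (t : ℕ) < n := fun t => by have := t.isLt; omega
  let π : (Fin n → 𝔽) →ₗ[𝔽] (Fin (n - n₁) → 𝔽) :=
    { toFun := fun v t => v ⟨n₁ + t, hemb t⟩
      map_add' := fun a b => rfl
      map_smul' := fun c a => rfl }
  have hπsurj : Function.Surjective π := by
    intro w
    refine ⟨fun i => if h : (i : ℕ) < n₁ then 0 else w ⟨(i : ℕ) - n₁, by have := i.isLt; omega⟩, ?_⟩
    funext t
    show (if h : (n₁ + (t : ℕ)) < n₁ then _ else w _) = w t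
    rw [dif_neg (by omega)]
    congr 1
    exact Fin.ext (by simp)
  set W : Submodule 𝔽 (Fin n → 𝔽) := LinearMap.ker π with hW
  have hmemW : ∀ v : Fin n → 𝔽, v ∈ W ↔ ∀ i : Fin n, n₁ ≤ (i : ℕ) → v i = 0 := by
    intro v
    constructor
    · intro hv i hi
      have := congrFun (LinearMap.mem_ker.mp hv) ⟨(i : ℕ) - n₁, by have := i.isLt; omega⟩
      have h2 : (⟨n₁ + ((i : ℕ) - n₁), by have := i.isLt; omega⟩ : Fin n) = i :=
        Fin.ext (by simp only [Fin.val_mk]; omega)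
      simpa [π, h2] using this
    · intro hv
      refine LinearMap.mem_ker.mpr (funext fun t => ?_)
      exact hv _ (by simp)
  have hWrank : Module.finrank 𝔽 W = n₁ := by
    have h1 := LinearMap.finrank_range_add_finrank_ker π
    have h2 : LinearMap.range π = ⊤ := LinearMap.range_eq_top.mpr hπsurj
    rw [h2, finrank_top, Module.finrank_fin_fun, Module.finrank_fin_fun, ← hW] at h1
    omega
  -- an automorphism carrying V onto W
  obtain ⟨V', hV'⟩ := Submodule.exists_isCompl V
  obtain ⟨W', hW'⟩ := Submodule.exists_isCompl W
  have hV'rank : Module.finrank 𝔽 V' = n - n₁ := by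
    have := Submodule.finrank_add_eq_of_isCompl hV'
    rw [Module.finrank_fin_fun] at this
    omega
  have hW'rank : Module.finrank 𝔽 W' = n - n₁ := by
    have := Submodule.finrank_add_eq_of_isCompl hW'
    rw [Module.finrank_fin_fun, hWrank] at this
    omega
  let g : V ≃ₗ[𝔽] W := LinearEquiv.ofFinrankEq _ _ (by rw [hWrank])
  let g' : V' ≃ₗ[𝔽] W' := LinearEquiv.ofFinrankEq _ _ (by rw [hV'rank, hW'rank])
  let e : (Fin n → 𝔽) ≃ₗ[𝔽] (Fin n → 𝔽) :=
    (Submodule.prodEquivOfIsCompl V V' hV').symm.trans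
      ((g.prodCongr g').trans (Submodule.prodEquivOfIsCompl W W' hW'))
  have he : ∀ (v : Fin n → 𝔽) (hv : v ∈ V), e v = (g ⟨v, hv⟩ : Fin n → 𝔽) := by
    intro v hv
    have h1 : (Submodule.prodEquivOfIsCompl V V' hV').symm v = (⟨v, hv⟩, 0) := by
      rw [LinearEquiv.symm_apply_eq]
      simp [Submodule.coe_prodEquivOfIsCompl']
    show (Submodule.prodEquivOfIsCompl W W' hW')
        ((g.prodCongr g') ((Submodule.prodEquivOfIsCompl V V' hV').symm v)) = _
    rw [h1]
    have hg0 : g' (0 : V') = 0 := (g' : V' →ₗ[𝔽] W').map_zero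
    have h2 : (g.prodCongr g') ((⟨v, hv⟩ : V), (0 : V')) = (g ⟨v, hv⟩, (0 : W')) := by
      rw [LinearEquiv.prodCongr_apply, hg0]
    rw [h2, Submodule.coe_prodEquivOfIsCompl']
    simp
  have hmapV : Submodule.map (e : (Fin n → 𝔽) →ₗ[𝔽] (Fin n → 𝔽)) V = W := by
    apply le_antisymm
    · rintro w ⟨v, hv, rfl⟩
      show e v ∈ W
      rw [he v hv]
      exact (g ⟨v, hv⟩).2
    · intro w hw
      refine ⟨(g.symm ⟨w, hw⟩ : Fin n → 𝔽), (g.symm ⟨w, hw⟩).2, ?_⟩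
      show e _ = w
      rw [he _ (g.symm ⟨w, hw⟩).2]
      simp
  set R : Matrix (Fin n) (Fin n) 𝔽 := LinearMap.toMatrix' (e : (Fin n → 𝔽) →ₗ[𝔽] (Fin n → 𝔽))
    with hRdef
  have hRmul : ∀ v : Fin n → 𝔽, R.mulVec v = e v := by
    intro v
    rw [hRdef, ← Matrix.toLin'_apply, Matrix.toLin'_toMatrix']
    rfl
  have hRunit : IsUnit R := by
    refine isUnit_iff_exists.mpr ⟨LinearMap.toMatrix' (e.symm : (Fin n → 𝔽) →ₗ[𝔽] (Fin n → 𝔽)),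
      ?_, ?_⟩ <;>
    · rw [hRdef, ← LinearMap.toMatrix'_comp, ← LinearMap.toMatrix'_id (R := 𝔽) (n := Fin n)]
      congr 1
      ext v
      simp
  have hRinv : ∀ v : Fin n → 𝔽, R⁻¹.mulVec (R.mulVec v) = v := by
    intro v
    rw [Matrix.mulVec_mulVec, Matrix.nonsing_inv_mul R
      ((Matrix.isUnit_iff_isUnit_det R).mp hRunit), Matrix.one_mulVec]
  -- the blocks
  set K₁ : Matrix (Fin n₁) (Fin r₁) 𝔽 := Matrix.of fun i j => (R * K) (Fin.castLE hn₁ i) j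
    with hK₁def
  set L₁ : Matrix (Fin n₁) (Fin r₂) 𝔽 := Matrix.of fun i j => (R * L) (Fin.castLE hn₁ i) j
    with hL₁def
  set L₂ : Matrix (Fin (n - n₁)) (Fin r₂) 𝔽 :=
    Matrix.of fun t j => (R * L) ⟨n₁ + t, hemb t⟩ j with hL₂def
  -- columns of R*K and R*L
  have hcolRK : ∀ j : Fin r₁, (fun i => (R * K) i j) = e (fun i => K i j) := by
    intro j
    have h1 : (fun i => K i j) = K.mulVec (Pi.single j 1) := by
      funext i
      rw [Matrix.mulVec_single]
      simp
    have h2 : (fun i => (R * K) i j) = (R * K).mulVec (Pi.single j 1) := by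
      funext i
      rw [Matrix.mulVec_single]
      simp
    rw [h2, ← Matrix.mulVec_mulVec, hRmul, h1]
  have hRLvec : ∀ x : Fin r₂ → 𝔽, (R * L).mulVec x = e (L.mulVec x) := by
    intro x
    rw [← Matrix.mulVec_mulVec, hRmul]
  -- membership of columns of R*K in W
  have hRKW : ∀ j : Fin r₁, (fun i => (R * K) i j) ∈ W := by
    intro j
    rw [hcolRK j, ← hmapV]
    exact ⟨_, ⟨Pi.single j 1, by
      funext i
      rw [Matrix.mulVecLin_apply, Matrix.mulVec_single]
      simp⟩, rfl⟩
  have hRKzero : ∀ (i : Fin n) (j : Fin r₁), n₁ ≤ (i : ℕ) → (R * K) i j = 0 := by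
    intro i j hi
    exact (hmemW _).mp (hRKW j) i hi
  -- rank of K₁
  let ρ : (Fin n → 𝔽) →ₗ[𝔽] (Fin n₁ → 𝔽) :=
    { toFun := fun v i => v (Fin.castLE hn₁ i)
      map_add' := fun a b => rfl
      map_smul' := fun c a => rfl }
  have hK₁lin : K₁.mulVecLin = ρ.comp (R * K).mulVecLin := by
    apply LinearMap.ext
    intro x
    funext i
    simp only [Matrix.mulVecLin_apply, LinearMap.comp_apply]
    show K₁.mulVec x i = ((R * K).mulVec x) (Fin.castLE hn₁ i)
    simp only [Matrix.mulVec, dotProduct, hK₁def, Matrix.of_apply]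
  have hRKrange : LinearMap.range (R * K).mulVecLin = W := by
    have h1 : (R * K).mulVecLin = (e : (Fin n → 𝔽) →ₗ[𝔽] (Fin n → 𝔽)).comp K.mulVecLin := by
      apply LinearMap.ext
      intro x
      simp only [Matrix.mulVecLin_apply, LinearMap.comp_apply]
      rw [← Matrix.mulVec_mulVec, hRmul]
      rfl
    rw [h1, LinearMap.range_comp, ← hV, hmapV]
  have hρinj : ∀ v ∈ W, ρ v = 0 → v = 0 := by
    intro v hv hρv
    funext i
    by_cases h : (i : ℕ) < n₁
    · have := congrFun hρv ⟨i, h⟩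
      simpa [ρ, Fin.castLE] using this
    · exact (hmemW v).mp hv i (by omega)
  have hK₁rank : K₁.rank = n₁ := by
    rw [Matrix.rank, hK₁lin, LinearMap.range_comp, hRKrange]
    have hinj : Function.Injective (ρ.comp W.subtype) := by
      rw [← LinearMap.ker_eq_bot]
      apply (Submodule.eq_bot_iff _).mpr
      rintro ⟨v, hv⟩ hker
      have : ρ v = 0 := hker
      exact Subtype.ext (hρinj v hv this)
    have h2 : LinearMap.range (ρ.comp W.subtype) = Submodule.map ρ W := by
      rw [LinearMap.range_comp, Submodule.range_subtype]
    rw [← h2, LinearMap.finrank_range_of_inj hinj, hWrank]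
  refine ⟨n₁, hn₁, R, hRunit, K₁, L₁, L₂, hK₁rank, ?_, ?_, ?_⟩
  · intro i j
    by_cases h : (i : ℕ) < n₁
    · rw [dif_pos h]
      rfl
    · rw [dif_neg h]
      exact hRKzero i j (by omega)
  · intro i j
    by_cases h : (i : ℕ) < n₁
    · rw [dif_pos h]
      rfl
    · rw [dif_neg h]
      have hieq : (⟨n₁ + ((i : ℕ) - n₁), hemb ⟨(i : ℕ) - n₁, by have := i.isLt; omega⟩⟩ : Fin n) = i :=
        Fin.ext (by simp only [Fin.val_mk]; omega)
      show (R * L) i j = (R * L) ⟨n₁ + ((i : ℕ) - n₁), _⟩ j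
      rw [hieq]
  · intro u
    constructor
    · rintro ⟨huK, huL⟩
      obtain ⟨x, hx⟩ := huL
      have huV : u ∈ V := huK
      have heu : e u ∈ W := hmapV ▸ ⟨u, huV, rfl⟩
      have heuL : (R * L).mulVec x = e u := by rw [hRLvec]; exact congrArg ⇑e hx
      have hzero : ∀ i : Fin n, n₁ ≤ (i : ℕ) → ((R * L).mulVec x) i = 0 := by
        intro i hi
        rw [heuL]
        exact (hmemW _).mp heu i hi
      refine ⟨x, ?_, ?_⟩
      · funext t
        have h0 : L₂.mulVec x t = ((R * L).mulVec x) ⟨n₁ + t, hemb t⟩ := rfl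
        rw [h0]
        exact hzero ⟨n₁ + t, hemb t⟩ (by simp)
      · have hru : R.mulVec u = (R * L).mulVec x := by
          rw [← Matrix.mulVec_mulVec]
          exact congrArg _ hx.symm
        have hw : (fun i : Fin n => if h : (i : ℕ) < n₁ then L₁.mulVec x ⟨i, h⟩ else 0)
            = R.mulVec u := by
          funext i
          rw [hru]
          by_cases h : (i : ℕ) < n₁
          · rw [dif_pos h]
            rfl
          · rw [dif_neg h]
            exact (hzero i (by omega)).symm
        rw [hw, hRinv]
    · rintro ⟨x, hx, rfl⟩
      set w : Fin n → 𝔽 := fun i => if h : (i : ℕ) < n₁ then L₁.mulVec x ⟨i, h⟩ else 0 with hwdef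
      have hwW : w ∈ W := by
        rw [hmemW]
        intro i hi
        rw [hwdef]
        exact dif_neg (by omega)
      have hwRL : w = (R * L).mulVec x := by
        funext i
        by_cases h : (i : ℕ) < n₁
        · rw [hwdef]
          show (if h : (i : ℕ) < n₁ then L₁.mulVec x ⟨i, h⟩ else 0) = _
          rw [dif_pos h]
          rfl
        · have h1 : ((R * L).mulVec x) i = L₂.mulVec x ⟨(i : ℕ) - n₁, by have := i.isLt; omega⟩ := by
            have hieq : (⟨n₁ + ((i : ℕ) - n₁), hemb ⟨(i : ℕ) - n₁, by have := i.isLt; omega⟩⟩ : Fin n) = i :=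
              Fin.ext (by simp only [Fin.val_mk]; omega)
            show ((R * L).mulVec x) i = ((R * L).mulVec x) ⟨n₁ + ((i : ℕ) - n₁), _⟩
            rw [hieq]
          rw [hwdef]
          show (if h : (i : ℕ) < n₁ then L₁.mulVec x ⟨i, h⟩ else 0) = _
          rw [dif_neg h, h1, hx]
          rfl
      constructor
      · -- u ∈ range K.mulVecLin
        obtain ⟨v, hvV, hev⟩ : w ∈ Submodule.map
            (e : (Fin n → 𝔽) →ₗ[𝔽] (Fin n → 𝔽)) V := hmapV ▸ hwW
        have hvw : R.mulVec v = w := by rw [hRmul]; exact hev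
        have : R⁻¹.mulVec w = v := by rw [← hvw, hRinv]
        rw [this]
        exact hvV
      · -- u ∈ range L.mulVecLin
        refine ⟨x, ?_⟩
        rw [Matrix.mulVecLin_apply]
        have : R⁻¹.mulVec w = L.mulVec x := by
          rw [hwRL, ← Matrix.mulVec_mulVec, hRinv]
        rw [← this]
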